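/- Let K be a field, n ≥ 1, and let A be an n×n tridiagonal matrix over K (A_{ij} = 0 whenever |i−j| > 1) all of whose superdiagonal entries A_{i,i+1} (1 ≤ i ≤ n−1) are nonzero. Then A is diagonalisable over K if and only if A has n distinct eigenvalues in K. -/

import Mathlib

/-- A tridiagonal matrix with nonvanishing superdiagonal is diagonalisable
if and only if it has `n` distinct eigenvalues. -/
theorem tridiagonal_diagonalisable_iff_distinct_eigenvalues
    {K : Type*} [Field K] (n : ℕ) (hn : 1 ≤ n) (A : Matrix (Fin n) (Fin n) K)
    (htri : ∀ i j : Fin n, 1 < ((i : ℤ) - (j : ℤ)).natAbs → A i j = 0)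
    (hsup : ∀ (i : ℕ) (hi : i + 1 < n), A ⟨i, Nat.lt_of_succ_lt hi⟩ ⟨i + 1, hi⟩ ≠ 0) :
    (∃ (b : Module.Basis (Fin n) K (Fin n → K)) (ev : Fin n → K),
        ∀ i, Matrix.toLin' A (b i) = ev i • b i) ↔
      {mu : K | LinearMap.ker (Matrix.toLin' (A - mu • 1)) ≠ ⊥}.ncard = n := by
  set f := Matrix.toLin' A with hf
  -- an eigenvector with vanishing first entry is zero
  have key : ∀ (μ : K) (v : Fin n → K), f v = μ • v → v ⟨0, hn⟩ = 0 → v = 0 := by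
    intro μ v hv h0
    have hrow : ∀ i : Fin n, ∑ j, A i j * v j = μ * v i := by
      intro i
      have := congrFun hv i
      simpa [hf, Matrix.toLin'_apply, Matrix.mulVec, dotProduct] using this
    have main : ∀ k, ∀ hk : k < n, v ⟨k, hk⟩ = 0 := by
      intro k
      induction k using Nat.strong_induction_on with
      | _ k ih =>
        cases k with
        | zero => intro hk; exact h0
        | succ m =>
          intro hk
          have hm : m < n := Nat.lt_of_succ_lt hk
          have hrowm := hrow ⟨m, hm⟩
          have hsum : ∑ j, A ⟨m, hm⟩ j * v j = A ⟨m, hm⟩ ⟨m + 1, hk⟩ * v ⟨m + 1, hk⟩ := by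
            apply Finset.sum_eq_single
            · intro j _ hj
              rcases lt_or_ge (j : ℕ) (m + 1) with hj' | hj'
              · have hvj : v j = 0 := by
                  have := ih (j : ℕ) hj' j.isLt
                  simpa using this
                simp [hvj]
              · have hj'' : m + 1 < (j : ℕ) := by
                  rcases lt_or_eq_of_le hj' with h | h
                  · exact h
                  · exact absurd (Fin.ext h.symm) hj
                have hA : A ⟨m, hm⟩ j = 0 := by
                  apply htri
                  simp only [Fin.val_mk]
                  omega
                simp [hA]
            · intro h; exact absurd (Finset.mem_univ _) h
          have hmz : v ⟨m, hm⟩ = 0 := ih m (Nat.lt_succ_self m) hm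
          rw [hsum, hmz, mul_zero] at hrowm
          have := hsup m hk
          exact (mul_eq_zero.mp hrowm).resolve_left this
    funext i
    have := main i i.isLt
    simpa using this
  -- two eigenvectors for the same eigenvalue are proportional
  have prop : ∀ (μ : K) (v w : Fin n → K), f v = μ • v → f w = μ • w → v ≠ 0 →
      ∃ c : K, w = c • v := by
    intro μ v w hv hw hv0
    have hv0' : v ⟨0, hn⟩ ≠ 0 := fun h => hv0 (key μ v hv h)
    refine ⟨w ⟨0, hn⟩ / v ⟨0, hn⟩, ?_⟩
    have hwv : f (w - (w ⟨0, hn⟩ / v ⟨0, hn⟩) • v) = μ • (w - (w ⟨0, hn⟩ / v ⟨0, hn⟩) • v) := by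
      rw [map_sub, map_smul, hv, hw, smul_sub, smul_comm]
    have h0 : (w - (w ⟨0, hn⟩ / v ⟨0, hn⟩) • v) ⟨0, hn⟩ = 0 := by
      simp only [Pi.sub_apply, Pi.smul_apply, smul_eq_mul]
      field_simp
      ring
    have := key μ _ hwv h0
    have := sub_eq_zero.mp this
    exact this
  -- the eigenvalue set
  have hker : ∀ μ : K, (LinearMap.ker (Matrix.toLin' (A - μ • 1)) ≠ ⊥) ↔
      ∃ v, v ≠ 0 ∧ f v = μ • v := by
    intro μ
    rw [Submodule.ne_bot_iff]
    constructor
    · rintro ⟨x, hx, hx0⟩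
      refine ⟨x, hx0, ?_⟩
      have := LinearMap.mem_ker.mp hx
      have h2 : A.mulVec x - μ • x = 0 := by
        simpa [Matrix.toLin'_apply, Matrix.sub_mulVec, Matrix.smul_mulVec,
          Matrix.one_mulVec] using this
      rw [sub_eq_zero] at h2
      simpa [hf, Matrix.toLin'_apply] using h2
    · rintro ⟨v, hv0, hv⟩
      refine ⟨v, LinearMap.mem_ker.mpr ?_, hv0⟩
      have : A.mulVec v = μ • v := by simpa [hf, Matrix.toLin'_apply] using hv
      simp [Matrix.toLin'_apply, Matrix.sub_mulVec, Matrix.smul_mulVec,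
        Matrix.one_mulVec, this]
  have hset : {mu : K | LinearMap.ker (Matrix.toLin' (A - mu • 1)) ≠ ⊥} =
      {mu : K | ∃ v, v ≠ 0 ∧ f v = mu • v} := by
    ext μ; exact hker μ
  rw [hset]
  constructor
  · rintro ⟨b, ev, hbev⟩
    have hinj : Function.Injective ev := by
      intro i j hij
      by_contra hne
      obtain ⟨c, hc⟩ := prop (ev i) (b i) (b j) (hbev i) (by rw [hbev j, hij]) (b.ne_zero i)
      have := congrArg (fun g => b.repr g j) hc
      simp only [map_smul, Module.Basis.repr_self, Finsupp.smul_single, smul_eq_mul, mul_one,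
        Finsupp.single_apply] at this
      rw [if_neg hne] at this
      simp at this
    have hrange : {mu : K | ∃ v, v ≠ 0 ∧ f v = mu • v} = Set.range ev := by
      ext μ
      constructor
      · rintro ⟨v, hv0, hv⟩
        -- expand v in the basis
        have hrepr : b.repr v ≠ 0 := fun h => hv0 (by
          have := congrArg (b.repr.symm) h
          simpa using this)
        obtain ⟨i, hi⟩ : ∃ i, b.repr v i ≠ 0 := by
          by_contra h
          push_neg at h
          exact hrepr (Finsupp.ext h)
        refine ⟨i, ?_⟩
        have hv' : v = ∑ j, b.repr v j • b j := (b.sum_repr v).symm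
        have h1 : f v = ∑ j, (b.repr v j * ev j) • b j := by
          conv_lhs => rw [hv']
          rw [map_sum]
          refine Finset.sum_congr rfl fun j _ => ?_
          rw [map_smul, hbev j, smul_smul]
        have h2 : b.repr (f v) i = μ * b.repr v i := by
          rw [hv, map_smul]
          simp
        have h3 : b.repr (f v) i = b.repr v i * ev i := by
          rw [h1]
          simp only [map_sum, map_smul, Module.Basis.repr_self, Finsupp.smul_single, smul_eq_mul,
            mul_one]
          rw [Finset.sum_apply']
          simp only [Finsupp.single_apply]
          rw [Finset.sum_ite_eq']
          simp
        have h4 := h3.symm.trans h2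
        exact mul_left_cancel₀ hi (by linear_combination h4)
      · rintro ⟨i, rfl⟩
        exact ⟨b i, b.ne_zero i, hbev i⟩
    rw [hrange, ← Set.image_univ, Set.ncard_image_of_injective _ hinj, Set.ncard_univ,
      Nat.card_eq_fintype_card, Fintype.card_fin]
  · intro hcard
    have hfin : {mu : K | ∃ v, v ≠ 0 ∧ f v = mu • v}.Finite := by
      by_contra h
      rw [Set.Infinite.ncard h] at hcard
      omega
    have hcards : hfin.toFinset.card = n := by
      rwa [Set.ncard_eq_toFinset_card _ hfin] at hcard
    let e := hfin.toFinset.equivFinOfCardEq hcards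
    set μs : Fin n → K := fun i => (e.symm i : K) with hμs
    have hμinj : Function.Injective μs := by
      intro i j h
      have : e.symm i = e.symm j := Subtype.ext h
      exact e.symm.injective this
    have hμ : ∀ i, ∃ v, v ≠ 0 ∧ f v = μs i • v := by
      intro i
      have := (e.symm i).2
      rw [Set.Finite.mem_toFinset] at this
      exact this
    choose xs hxs0 hxs using hμ
    have heig : ∀ i, Module.End.HasEigenvector f (μs i) (xs i) :=
      fun i => ⟨Module.End.mem_eigenspace_iff.mpr (hxs i), hxs0 i⟩
    have hli := Module.End.eigenvectors_linearIndependent' f μs hμinj xs heig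
    haveI : Nonempty (Fin n) := ⟨⟨0, hn⟩⟩
    have hcard' : Fintype.card (Fin n) = Module.finrank K (Fin n → K) := by
      simp [Module.finrank_fintype_fun_eq_card]
    let b := basisOfLinearIndependentOfCardEqFinrank hli hcard'
    refine ⟨b, μs, fun i => ?_⟩
    have hb : b i = xs i := by
      simp [b, coe_basisOfLinearIndependentOfCardEqFinrank]
    rw [hb]
    exact hxs i
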